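/- arXiv:0804.1200 — 4 statements merged into one kernel-verified Lean document; each statement's English description precedes it below -/
import Mathlib

section
/- Let Σ be an alphabet partitioned into two sets S (sources) and T (sinks), and consider a string rewriting relation → on Σ* in which every rule has one of the four shapes: (A) s·t → t'·s'·s'' with s,s',s'' ∈ S, t,t' ∈ T; (B) s·t → t'·s' with s,s' ∈ S, t,t' ∈ T; (C) t → t'·s with t ∈ T⁺ (a distinguished subset of T), t' ∈ T, s ∈ S, where T⁺-letters occur in no other rule and each right-hand side of a rule of kind (A), (B), (C) contains no letter of T⁺; (D) t·t' → s with t,t' ∈ T, s ∈ S; (0a) t·t' → ε with t,t' ∈ T; (0b) s·s' → ε with s,s' ∈ S. Then → is terminating (there is no infinite reduction sequence). -/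
open Classical in
/-- count of letters of `P` in a word -/
noncomputable def cnt6 {A : Type*} (P : Set A) : List A → ℕ
  | [] => 0
  | a :: w => (if a ∈ P then 1 else 0) + cnt6 P w

open Classical in
/-- weight: each `S`-letter contributes `3 ^ (number of T-letters to its right + k)` -/
noncomputable def mu6 {A : Type*} (S T : Set A) : List A → ℕ → ℕ
  | [], _ => 0
  | a :: w, k => (if a ∈ S then 3 ^ (cnt6 T w + k) else 0) + mu6 S T w k

lemma cnt6_append {A : Type*} (P : Set A) (u v : List A) :
    cnt6 P (u ++ v) = cnt6 P u + cnt6 P v := by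
  induction u with
  | nil => simp [cnt6]
  | cons a u ih => simp only [List.cons_append, cnt6, List.append_eq, ih]; omega

lemma mu6_append {A : Type*} (S T : Set A) (u v : List A) (k : ℕ) :
    mu6 S T (u ++ v) k = mu6 S T u (cnt6 T v + k) + mu6 S T v k := by
  induction u with
  | nil => simp [mu6]
  | cons a u ih =>
    simp only [List.cons_append, mu6, List.append_eq, ih, cnt6_append]
    have : cnt6 T u + cnt6 T v + k = cnt6 T u + (cnt6 T v + k) := by omega
    rw [this]; omega

lemma lex3_of {a b : ℕ × ℕ × ℕ}
    (h : a.1 < b.1 ∨ (a.1 = b.1 ∧ (a.2.1 < b.2.1 ∨ (a.2.1 = b.2.1 ∧ a.2.2 < b.2.2)))) :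
    Prod.Lex (· < · : ℕ → ℕ → Prop)
      (Prod.Lex (· < · : ℕ → ℕ → Prop) (· < · : ℕ → ℕ → Prop)) a b := by
  obtain ⟨a1, a2, a3⟩ := a
  obtain ⟨b1, b2, b3⟩ := b
  rcases h with h | ⟨h1, h | ⟨h2, h⟩⟩
  · exact Prod.Lex.left _ _ h
  · simp only at h1; subst h1; exact Prod.Lex.right _ (Prod.Lex.left _ _ h)
  · simp only at h1 h2; subst h1; subst h2; exact Prod.Lex.right _ (Prod.Lex.right _ h)

/-- Abstract termination theorem (Section 5.1): a string rewriting system on an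
alphabet partitioned into sources S and sinks T (with distinguished sinks T⁺ ⊆ T),
all of whose rules have one of the shapes (A) st → t's's'', (B) st → t's',
(C) t⁺ → t's, (D) tt' → s, (0a) tt' → ε, (0b) ss' → ε (where T⁺-letters occur only
as left-hand sides of rules of kind (C) or in rules of kind (0a)), is terminating. -/
theorem stmt_6 {A : Type*} (S T Tp : Set A)
    (hdisj : Disjoint S T) (hcover : S ∪ T = Set.univ) (hTp : Tp ⊆ T)
    (R : Set (List A × List A))
    (hshape : ∀ p ∈ R,
      (∃ s t t' s' s'', s ∈ S ∧ t ∈ T ∧ t ∉ Tp ∧ t' ∈ T ∧ t' ∉ Tp ∧ s' ∈ S ∧ s'' ∈ S ∧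
        p = ([s, t], [t', s', s''])) ∨
      (∃ s t t' s', s ∈ S ∧ t ∈ T ∧ t ∉ Tp ∧ t' ∈ T ∧ t' ∉ Tp ∧ s' ∈ S ∧
        p = ([s, t], [t', s'])) ∨
      (∃ t t' s, t ∈ Tp ∧ t' ∈ T ∧ t' ∉ Tp ∧ s ∈ S ∧ p = ([t], [t', s])) ∨
      (∃ t t' s, t ∈ T ∧ t ∉ Tp ∧ t' ∈ T ∧ t' ∉ Tp ∧ s ∈ S ∧ p = ([t, t'], [s])) ∨
      (∃ t t', t ∈ T ∧ t' ∈ T ∧ p = ([t, t'], ([] : List A))) ∨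
      (∃ s s', s ∈ S ∧ s' ∈ S ∧ p = ([s, s'], ([] : List A)))) :
    ¬ ∃ f : ℕ → List A, ∀ n, ∃ u v l r,
      (l, r) ∈ R ∧ f n = u ++ l ++ v ∧ f (n + 1) = u ++ r ++ v := by
  classical
  rintro ⟨f, hf⟩
  have hST : ∀ a ∈ S, a ∉ T := fun a ha hb => Set.disjoint_left.mp hdisj ha hb
  have hSTp : ∀ a ∈ S, a ∉ Tp := fun a ha hb => hST a ha (hTp hb)
  have hTS : ∀ a ∈ T, a ∉ S := fun a ha hb => hST a hb ha
  set m : List A → ℕ × ℕ × ℕ := fun w => (cnt6 Tp w, cnt6 T w, mu6 S T w 0) with hm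
  set r : ℕ × ℕ × ℕ → ℕ × ℕ × ℕ → Prop :=
    Prod.Lex (· < ·) (Prod.Lex (· < ·) (· < ·)) with hr
  have hwf : WellFounded r :=
    WellFounded.prod_lex (Nat.lt_wfRel.wf) (WellFounded.prod_lex Nat.lt_wfRel.wf Nat.lt_wfRel.wf)
  have pow3 : ∀ k : ℕ, (0:ℕ) < 3 ^ k := fun k => Nat.pow_pos (by norm_num)
  have pow3' : ∀ k : ℕ, (3:ℕ) ^ (1 + k) = 3 * 3 ^ k := fun k => by rw [pow_add, pow_one]
  have key : ∀ n, r (m (f (n + 1))) (m (f n)) := by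
    intro n
    obtain ⟨u, v, l, rr, hmem, h1, h2⟩ := hf n
    rw [h1, h2]
    rcases hshape _ hmem with
        ⟨s, t, t', s', s'', hs, ht, htp, ht'T, ht'p, hs', hs'', hp⟩ |
        ⟨s, t, t', s', hs, ht, htp, ht'T, ht'p, hs', hp⟩ |
        ⟨t, t', s, htTp, ht'T, ht'p, hs, hp⟩ |
        ⟨t, t', s, ht, htp, ht'T, ht'p, hs, hp⟩ |
        ⟨t, t', ht, ht', hp⟩ |
        ⟨s, s', hs, hs', hp⟩
    · -- (A) st → t's's''
      simp only [Prod.mk.injEq] at hp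
      obtain ⟨rfl, rfl⟩ := hp
      apply lex3_of
      simp only [hm, cnt6_append, mu6_append, cnt6, mu6, List.append_eq,
        if_pos hs, if_pos ht, if_pos ht'T, if_pos hs', if_pos hs'',
        if_neg htp, if_neg ht'p, if_neg (hSTp _ hs), if_neg (hSTp _ hs'),
        if_neg (hSTp _ hs''), if_neg (hST _ hs), if_neg (hST _ hs'), if_neg (hST _ hs''),
        if_neg (hTS _ ht), if_neg (hTS _ ht'T), Nat.add_zero, Nat.zero_add]
      refine Or.inr ⟨trivial, Or.inr ⟨trivial, ?_⟩⟩
      rw [pow3' (cnt6 T v)]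
      have := pow3 (cnt6 T v)
      omega
    · -- (B) st → t's'
      simp only [Prod.mk.injEq] at hp
      obtain ⟨rfl, rfl⟩ := hp
      apply lex3_of
      simp only [hm, cnt6_append, mu6_append, cnt6, mu6, List.append_eq,
        if_pos hs, if_pos ht, if_pos ht'T, if_pos hs',
        if_neg htp, if_neg ht'p, if_neg (hSTp _ hs), if_neg (hSTp _ hs'),
        if_neg (hST _ hs), if_neg (hST _ hs'),
        if_neg (hTS _ ht), if_neg (hTS _ ht'T), Nat.add_zero, Nat.zero_add]
      refine Or.inr ⟨trivial, Or.inr ⟨trivial, ?_⟩⟩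
      rw [pow3' (cnt6 T v)]
      have := pow3 (cnt6 T v)
      omega
    · -- (C) t⁺ → t's
      simp only [Prod.mk.injEq] at hp
      obtain ⟨rfl, rfl⟩ := hp
      have htT : t ∈ T := hTp htTp
      apply lex3_of
      refine Or.inl ?_
      simp only [hm, cnt6_append, cnt6,
        if_pos htTp, if_neg ht'p, if_neg (hSTp _ hs), Nat.add_zero, Nat.zero_add]
      omega
    · -- (D) tt' → s
      simp only [Prod.mk.injEq] at hp
      obtain ⟨rfl, rfl⟩ := hp
      apply lex3_of
      refine Or.inr ⟨?_, Or.inl ?_⟩ <;>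
        simp only [hm, cnt6_append, cnt6,
          if_pos ht, if_pos ht'T, if_neg htp, if_neg ht'p, if_neg (hSTp _ hs),
          if_neg (hST _ hs), Nat.add_zero, Nat.zero_add]
      all_goals omega
    · -- (0a) tt' → ε
      simp only [Prod.mk.injEq] at hp
      obtain ⟨rfl, rfl⟩ := hp
      apply lex3_of
      simp only [hm, cnt6_append, cnt6,
        if_pos ht, if_pos ht', Nat.add_zero, Nat.zero_add]
      split_ifs <;> omega
    · -- (0b) ss' → ε
      simp only [Prod.mk.injEq] at hp
      obtain ⟨rfl, rfl⟩ := hp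
      apply lex3_of
      refine Or.inr ⟨?_, Or.inr ⟨?_, ?_⟩⟩ <;>
        simp only [hm, cnt6_append, mu6_append, cnt6, mu6, List.append_eq,
          if_pos hs, if_pos hs', if_neg (hSTp _ hs), if_neg (hSTp _ hs'),
          if_neg (hST _ hs), if_neg (hST _ hs'), Nat.add_zero, Nat.zero_add]
      all_goals (have := pow3 (cnt6 T v); omega)
  have noinf : ∀ a : ℕ × ℕ × ℕ, ∀ n, m (f n) = a → False := by
    intro a
    induction hwf.apply a with
    | intro x hx ih =>
      intro n hn
      exact ih _ (hn ▸ key n) (n + 1) rfl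
  exact noinf (m (f 0)) 0 rfl
end

section
/- In the rewriting system with rules (2') s_k t_l⁻¹ → t_{l'}⁻¹ s_{k'}, (3) t_l⁻¹ t_j⁻¹ → s_k⁻¹, (2) s_{k'} t_j⁻¹ → t_{l'}, and free cancellations, the critical pair from the overlap of (2') and (3) at t_l⁻¹ in the word s_k t_l⁻¹ t_j⁻¹ resolves: both s_k s_k⁻¹ and t_{l'}⁻¹ s_{k'} t_j⁻¹ reduce to the empty word. -/
/-- Section 5.3: in the rewriting system with rules (2') s_k t_l⁻¹ → t_{l'}⁻¹s_{k'},
(3) t_l⁻¹t_j⁻¹ → s_k⁻¹, (2) s_{k'} t_j⁻¹ → t_{l'} and free cancellations, the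
critical pair from the overlap of (2') and (3) at t_l⁻¹ in s_k t_l⁻¹ t_j⁻¹
resolves: both s_k s_k⁻¹ and t_{l'}⁻¹ s_{k'} t_j⁻¹ reduce to the empty word. -/
theorem stmt_15 {A : Type*} (R : Set (List A × List A))
    (sk isk itl itj itl' tl' sk' : A)
    (r2' : ([sk, itl], [itl', sk']) ∈ R)
    (r3 : ([itl, itj], [isk]) ∈ R)
    (r2 : ([sk', itj], [tl']) ∈ R)
    (r0a : ([sk, isk], ([] : List A)) ∈ R)
    (r0b : ([itl', tl'], ([] : List A)) ∈ R)
    (step : List A → List A → Prop)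
    (hstep : ∀ a b, step a b ↔
      ∃ u v l r, (l, r) ∈ R ∧ a = u ++ l ++ v ∧ b = u ++ r ++ v) :
    Relation.ReflTransGen step [sk, isk] [] ∧
    Relation.ReflTransGen step [itl', sk', itj] [] := by
  constructor
  · exact Relation.ReflTransGen.single ((hstep _ _).mpr ⟨[], [], _, _, r0a, rfl, rfl⟩)
  · exact Relation.ReflTransGen.head
      ((hstep _ _).mpr ⟨[itl'], [], _, _, r2, rfl, rfl⟩)
      (Relation.ReflTransGen.single ((hstep _ _).mpr ⟨[], [], _, _, r0b, rfl, rfl⟩))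
end

section
/- In the rewriting system with rules (3) t_l⁻¹ t_j⁻¹ → s_k⁻¹ and (3') t_j⁻¹ t_{l'}⁻¹ → s_{k'}⁻¹ and (4) s_k⁻¹ t_{l'}⁻¹ → t_l⁻¹ s_{k'}⁻¹, the critical pair arising from the overlap at t_j⁻¹ in t_l⁻¹ t_j⁻¹ t_{l'}⁻¹ resolves: s_k⁻¹ t_{l'}⁻¹ reduces via rule (4) to t_l⁻¹ s_{k'}⁻¹, which is exactly the other reduct. -/
/-- Section 5.3: in the rewriting system with rules (3) t_l⁻¹t_j⁻¹ → s_k⁻¹,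
(3') t_j⁻¹t_{l'}⁻¹ → s_{k'}⁻¹ and (4) s_k⁻¹t_{l'}⁻¹ → t_l⁻¹s_{k'}⁻¹, the critical
pair from the overlap at t_j⁻¹ in t_l⁻¹t_j⁻¹t_{l'}⁻¹ resolves: s_k⁻¹t_{l'}⁻¹
reduces by rule (4) to t_l⁻¹s_{k'}⁻¹, the other reduct. -/
theorem stmt_16 {A : Type*} (R : Set (List A × List A))
    (itl itj itl' isk isk' : A)
    (r3 : ([itl, itj], [isk]) ∈ R)
    (r3' : ([itj, itl'], [isk']) ∈ R)
    (r4 : ([isk, itl'], [itl, isk']) ∈ R)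
    (step : List A → List A → Prop)
    (hstep : ∀ a b, step a b ↔
      ∃ u v l r, (l, r) ∈ R ∧ a = u ++ l ++ v ∧ b = u ++ r ++ v) :
    step [isk, itl'] [itl, isk'] ∧
    ∃ z, Relation.ReflTransGen step [isk, itl'] z ∧
      Relation.ReflTransGen step [itl, isk'] z := by
  have h : step [isk, itl'] [itl, isk'] := by
    rw [hstep]; exact ⟨[], [], _, _, r4, by simp, by simp⟩
  exact ⟨h, [itl, isk'], Relation.ReflTransGen.single h, Relation.ReflTransGen.refl⟩
end

section
/- In the rewriting system with rules (5) s_m⁻¹ t_j⁻¹ → t_p⁻¹ s_{m'} s_k⁻¹, (3) t_j⁻¹ t_{l'}⁻¹ → s_{k'}⁻¹, (4) s_k⁻¹ t_{l'}⁻¹ → t_l⁻¹ s_{k'}⁻¹, (β) s_{m'} t_l⁻¹ → t_p s_m⁻¹, and free cancellations, the critical pair from the overlap of (5) and (3) at t_j⁻¹ in s_m⁻¹ t_j⁻¹ t_{l'}⁻¹ resolves: t_p⁻¹ s_{m'} s_k⁻¹ t_{l'}⁻¹ →(4) t_p⁻¹ s_{m'} t_l⁻¹ s_{k'}⁻¹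 →(β) t_p⁻¹ t_p s_m⁻¹ s_{k'}⁻¹ →(0) s_m⁻¹ s_{k'}⁻¹, equal to the other reduct. -/
/-- Section 5.3: in the rewriting system with rules (5) s_m⁻¹t_j⁻¹ → t_p⁻¹s_{m'}s_k⁻¹,
(3) t_j⁻¹t_{l'}⁻¹ → s_{k'}⁻¹, (4) s_k⁻¹t_{l'}⁻¹ → t_l⁻¹s_{k'}⁻¹,
(β) s_{m'}t_l⁻¹ → t_p s_m⁻¹ and free cancellations, the critical pair from the
overlap of (5) and (3) at t_j⁻¹ in s_m⁻¹t_j⁻¹t_{l'}⁻¹ resolves: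
t_p⁻¹s_{m'}s_k⁻¹t_{l'}⁻¹ reduces (by (4), (β), (0)) to s_m⁻¹s_{k'}⁻¹, the other reduct. -/
theorem stmt_17 {A : Type*} (R : Set (List A × List A))
    (ism itj itl' itp sm' isk itl isk' tp : A)
    (r5 : ([ism, itj], [itp, sm', isk]) ∈ R)
    (r3 : ([itj, itl'], [isk']) ∈ R)
    (r4 : ([isk, itl'], [itl, isk']) ∈ R)
    (rβ : ([sm', itl], [tp, ism]) ∈ R)
    (r0 : ([itp, tp], ([] : List A)) ∈ R)
    (step : List A → List A → Prop)
    (hstep : ∀ a b, step a b ↔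
      ∃ u v l r, (l, r) ∈ R ∧ a = u ++ l ++ v ∧ b = u ++ r ++ v) :
    Relation.ReflTransGen step [itp, sm', isk, itl'] [ism, isk'] ∧
    ∃ z, Relation.ReflTransGen step [itp, sm', isk, itl'] z ∧
      Relation.ReflTransGen step [ism, isk'] z := by
  have h1 : step [itp, sm', isk, itl'] [itp, sm', itl, isk'] := by
    rw [hstep]; exact ⟨[itp, sm'], [], _, _, r4, rfl, rfl⟩
  have h2 : step [itp, sm', itl, isk'] [itp, tp, ism, isk'] := by
    rw [hstep]; exact ⟨[itp], [isk'], _, _, rβ, rfl, rfl⟩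
  have h3 : step [itp, tp, ism, isk'] [ism, isk'] := by
    rw [hstep]; exact ⟨[], [ism, isk'], _, _, r0, rfl, rfl⟩
  have h : Relation.ReflTransGen step [itp, sm', isk, itl'] [ism, isk'] :=
    .trans (.trans (.single h1) (.single h2)) (.single h3)
  exact ⟨h, [ism, isk'], h, .refl⟩
end
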